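/- The number of plane trees on n edges with k leaves equals the Narayana number (1/n)*C(n,k)*C(n,k-1), for n >= k >= 1. -/

import Mathlib

inductive PlaneTree : Type
  | node : List PlaneTree → PlaneTree

namespace PlaneTree

def edges : PlaneTree → ℕ
  | node ts => (ts.attach.map (fun t => edges t.1)).sum + ts.length
decreasing_by have := List.sizeOf_lt_of_mem t.2; simp [PlaneTree.node.sizeOf_spec]; omega

def leafAux : PlaneTree → ℕ
  | node ts => (if ts.length = 0 then 1 else 0) + (ts.attach.map (fun t => leafAux t.1)).sum
decreasing_by have := List.sizeOf_lt_of_mem t.2; simp [PlaneTree.node.sizeOf_spec]; omega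

def internalAux : PlaneTree → ℕ
  | node ts => (if ts.length = 1 then 1 else 0) + (ts.attach.map (fun t => internalAux t.1)).sum
decreasing_by have := List.sizeOf_lt_of_mem t.2; simp [PlaneTree.node.sizeOf_spec]; omega

/-- number of leaves: non-root vertices of down degree 0 -/
def leaves : PlaneTree → ℕ
  | node ts => (ts.map leafAux).sum

/-- number of internal nodes: non-root vertices of down degree 1 -/
def internals : PlaneTree → ℕ
  | node ts => (ts.map internalAux).sum

def rootDegree : PlaneTree → ℕ
  | node ts => ts.length

end PlaneTree

namespace PlaneTree

lemma edges_node (ts : List PlaneTree) : edges (node ts) = (ts.map edges).sum + ts.length := by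
  rw [edges]; congr 1; rw [List.attach_map_val]

lemma leaves_node (ts : List PlaneTree) : leaves (node ts) = (ts.map leafAux).sum := rfl

lemma leafAux_node (ts : List PlaneTree) :
    leafAux (node ts) = (if ts.length = 0 then 1 else 0) + (ts.map leafAux).sum := by
  rw [leafAux]; congr 1; rw [List.attach_map_val]

lemma one_le_leafAux : ∀ t : PlaneTree, 1 ≤ leafAux t
  | node ts => by
    rw [leafAux_node]
    cases ts with
    | nil => simp
    | cons a l =>
      have := one_le_leafAux a
      simp only [List.map_cons, List.sum_cons]
      omega
decreasing_by simp [PlaneTree.node.sizeOf_spec]; omega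

lemma leafAux_eq_leaves (ts : List PlaneTree) (h : ts ≠ []) :
    leafAux (node ts) = leaves (node ts) := by
  rw [leafAux_node, leaves_node]
  have : ts.length ≠ 0 := by simpa using h
  simp [this]

lemma one_le_leaves (ts : List PlaneTree) (h : ts ≠ []) : 1 ≤ leaves (node ts) := by
  cases ts with
  | nil => exact absurd rfl h
  | cons a l =>
    rw [leaves_node]
    have := one_le_leafAux a
    simp only [List.map_cons, List.sum_cons]
    omega

lemma one_le_edges (ts : List PlaneTree) (h : ts ≠ []) : 1 ≤ edges (node ts) := by
  rw [edges_node]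
  cases ts with
  | nil => exact absurd rfl h
  | cons a l => simp; omega


end PlaneTree


open PlaneTree

def IsForest (l n k : ℕ) (v : List PlaneTree) : Prop :=
  v.length = l ∧ (v.map PlaneTree.edges).sum = n ∧ (v.map PlaneTree.leaves).sum = k ∧
    ∀ t ∈ v, t.rootDegree ≠ 0

def Forest (l n k : ℕ) : Type := {v : List PlaneTree // IsForest l n k v}

namespace ForestEquiv

variable {l n k : ℕ}

abbrev FC (l n k : ℕ) : Type :=
  Forest l n k ⊕ Forest (l+1) n k ⊕ Forest (l+1) n (k+1) ⊕ Forest (l+2) n (k+1)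

def fwd : Forest (l+1) (n+1) (k+1) → FC l n k
  | ⟨[], hv⟩ => absurd hv.1 (by simp)
  | ⟨node [] :: _, hv⟩ => absurd (hv.2.2.2 _ (List.mem_cons_self)) (by simp [rootDegree])
  | ⟨node (node [] :: []) :: rest, hv⟩ => Sum.inl ⟨rest, by
      obtain ⟨h1, h2, h3, h4⟩ := hv
      rw [List.forall_mem_cons] at h4
      simp [edges_node, leaves_node, leafAux_node] at h1 h2 h3
      exact ⟨by omega, by omega, by omega, h4.2⟩⟩
  | ⟨node (node [] :: (t :: ts)) :: rest, hv⟩ => Sum.inr (Sum.inl ⟨node (t :: ts) :: rest, by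
      obtain ⟨h1, h2, h3, h4⟩ := hv
      rw [List.forall_mem_cons] at h4
      simp [edges_node, leaves_node, leafAux_node] at h1 h2 h3
      refine ⟨?_, ?_, ?_, List.forall_mem_cons.mpr ⟨by simp [rootDegree], h4.2⟩⟩ <;>
        · simp [edges_node, leaves_node, leafAux_node]; omega⟩)
  | ⟨node (node (u :: us) :: []) :: rest, hv⟩ => Sum.inr (Sum.inr (Sum.inl ⟨node (u :: us) :: rest, by
      obtain ⟨h1, h2, h3, h4⟩ := hv
      rw [List.forall_mem_cons] at h4
      simp [edges_node, leaves_node, leafAux_node] at h1 h2 h3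
      refine ⟨?_, ?_, ?_, List.forall_mem_cons.mpr ⟨by simp [rootDegree], h4.2⟩⟩ <;>
        · simp [edges_node, leaves_node, leafAux_node]; omega⟩))
  | ⟨node (node (u :: us) :: (t :: ts)) :: rest, hv⟩ =>
      Sum.inr (Sum.inr (Sum.inr ⟨node (u :: us) :: node (t :: ts) :: rest, by
      obtain ⟨h1, h2, h3, h4⟩ := hv
      rw [List.forall_mem_cons] at h4
      simp [edges_node, leaves_node, leafAux_node] at h1 h2 h3
      refine ⟨?_, ?_, ?_, List.forall_mem_cons.mpr ⟨by simp [rootDegree],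
        List.forall_mem_cons.mpr ⟨by simp [rootDegree], h4.2⟩⟩⟩ <;>
        · simp [edges_node, leaves_node, leafAux_node]; omega⟩))

def bwd : FC l n k → Forest (l+1) (n+1) (k+1)
  | Sum.inl ⟨rest, hv⟩ => ⟨node [node []] :: rest, by
      obtain ⟨h1, h2, h3, h4⟩ := hv
      refine ⟨?_, ?_, ?_, List.forall_mem_cons.mpr ⟨by simp [rootDegree], h4⟩⟩ <;>
        · simp [edges_node, leaves_node, leafAux_node]; omega⟩
  | Sum.inr (Sum.inl ⟨[], hv⟩) => absurd hv.1 (by simp)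
  | Sum.inr (Sum.inl ⟨node [] :: _, hv⟩) =>
      absurd (hv.2.2.2 _ (List.mem_cons_self)) (by simp [rootDegree])
  | Sum.inr (Sum.inl ⟨node (t :: ts) :: rest, hv⟩) => ⟨node (node [] :: t :: ts) :: rest, by
      obtain ⟨h1, h2, h3, h4⟩ := hv
      rw [List.forall_mem_cons] at h4
      simp [edges_node, leaves_node, leafAux_node] at h1 h2 h3
      refine ⟨?_, ?_, ?_, List.forall_mem_cons.mpr ⟨by simp [rootDegree], h4.2⟩⟩ <;>
        · simp [edges_node, leaves_node, leafAux_node]; omega⟩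
  | Sum.inr (Sum.inr (Sum.inl ⟨[], hv⟩)) => absurd hv.1 (by simp)
  | Sum.inr (Sum.inr (Sum.inl ⟨node [] :: _, hv⟩)) =>
      absurd (hv.2.2.2 _ (List.mem_cons_self)) (by simp [rootDegree])
  | Sum.inr (Sum.inr (Sum.inl ⟨node (u :: us) :: rest, hv⟩)) => ⟨node [node (u :: us)] :: rest, by
      obtain ⟨h1, h2, h3, h4⟩ := hv
      rw [List.forall_mem_cons] at h4
      simp [edges_node, leaves_node, leafAux_node] at h1 h2 h3
      refine ⟨?_, ?_, ?_, List.forall_mem_cons.mpr ⟨by simp [rootDegree], h4.2⟩⟩ <;>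
        · simp [edges_node, leaves_node, leafAux_node]; omega⟩
  | Sum.inr (Sum.inr (Sum.inr ⟨[], hv⟩)) => absurd hv.1 (by simp)
  | Sum.inr (Sum.inr (Sum.inr ⟨[_], hv⟩)) => absurd hv.1 (by simp)
  | Sum.inr (Sum.inr (Sum.inr ⟨node [] :: _ :: _, hv⟩)) =>
      absurd (hv.2.2.2 _ (List.mem_cons_self)) (by simp [rootDegree])
  | Sum.inr (Sum.inr (Sum.inr ⟨_ :: node [] :: _, hv⟩)) =>
      absurd (hv.2.2.2 _ (List.mem_cons_of_mem _ (List.mem_cons_self))) (by simp [rootDegree])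
  | Sum.inr (Sum.inr (Sum.inr ⟨node (u :: us) :: node (t :: ts) :: rest, hv⟩)) =>
      ⟨node (node (u :: us) :: t :: ts) :: rest, by
      obtain ⟨h1, h2, h3, h4⟩ := hv
      rw [List.forall_mem_cons, List.forall_mem_cons] at h4
      simp [edges_node, leaves_node, leafAux_node] at h1 h2 h3
      refine ⟨?_, ?_, ?_, List.forall_mem_cons.mpr ⟨by simp [rootDegree], h4.2.2⟩⟩ <;>
        · simp [edges_node, leaves_node, leafAux_node]; omega⟩

def forestEquiv : Forest (l+1) (n+1) (k+1) ≃ FC l n k where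
  toFun := fwd
  invFun := bwd
  left_inv := by
    rintro ⟨(_ | ⟨(⟨(_ | ⟨(⟨(_ | ⟨u, us⟩)⟩ : PlaneTree), (_ | ⟨t, ts⟩)⟩)⟩ : PlaneTree), rest⟩), hv⟩
    · exact absurd hv.1 (by simp)
    · exact absurd (hv.2.2.2 _ (List.mem_cons_self)) (by simp [rootDegree])
    · rfl
    · rfl
    · rfl
    · rfl
  right_inv := by
    rintro (⟨rest, hv⟩ | ⟨v, hv⟩ | ⟨v, hv⟩ | ⟨v, hv⟩)
    · rfl
    · rcases v with _ | ⟨⟨_ | ⟨t, ts⟩⟩, rest⟩ <;>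
        first
          | rfl
          | (exfalso; obtain ⟨h1, h2, h3, h4⟩ := hv;
             simp [List.forall_mem_cons, rootDegree] at h1 h4)
    · rcases v with _ | ⟨⟨_ | ⟨u, us⟩⟩, rest⟩ <;>
        first
          | rfl
          | (exfalso; obtain ⟨h1, h2, h3, h4⟩ := hv;
             simp [List.forall_mem_cons, rootDegree] at h1 h4)
    · rcases v with _ | ⟨⟨_ | ⟨u, us⟩⟩, _ | ⟨⟨_ | ⟨t, ts⟩⟩, rest⟩⟩ <;>
        first
          | rfl
          | (exfalso; obtain ⟨h1, h2, h3, h4⟩ := hv;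
             simp [List.forall_mem_cons, rootDegree] at h1 h4)

end ForestEquiv

open ForestEquiv

lemma rootDeg_ne_zero_iff (t : PlaneTree) : t.rootDegree ≠ 0 ↔ ∃ ts, ts ≠ [] ∧ t = node ts := by
  cases t with
  | node ts =>
    simp only [rootDegree]
    constructor
    · intro h
      exact ⟨ts, by simpa [List.length_eq_zero_iff] using h, rfl⟩
    · rintro ⟨us, hus, h⟩
      cases h
      simpa [List.length_eq_zero_iff] using hus

lemma one_le_edges' (t : PlaneTree) (h : t.rootDegree ≠ 0) : 1 ≤ t.edges := by
  obtain ⟨ts, hts, rfl⟩ := (rootDeg_ne_zero_iff t).mp h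
  exact one_le_edges ts hts

lemma one_le_leaves' (t : PlaneTree) (h : t.rootDegree ≠ 0) : 1 ≤ t.leaves := by
  obtain ⟨ts, hts, rfl⟩ := (rootDeg_ne_zero_iff t).mp h
  exact one_le_leaves ts hts

lemma forest_length_le (v : List PlaneTree) (h : ∀ t ∈ v, t.rootDegree ≠ 0) :
    v.length ≤ (v.map edges).sum ∧ v.length ≤ (v.map leaves).sum := by
  induction v with
  | nil => simp
  | cons a w ih =>
    rw [List.forall_mem_cons] at h
    obtain ⟨ih1, ih2⟩ := ih h.2
    have e1 := one_le_edges' a h.1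
    have e2 := one_le_leaves' a h.1
    constructor <;> simp <;> omega

lemma forest_nil (v : List PlaneTree) (l k : ℕ) (h : IsForest l 0 k v) : v = [] := by
  obtain ⟨h1, h2, h3, h4⟩ := h
  have := (forest_length_le v h4).1
  rw [h2] at this
  simpa [List.length_eq_zero_iff] using (by omega : v.length = 0)

instance forest_zero_sub (l k : ℕ) : Subsingleton (Forest l 0 k) := by
  constructor
  rintro ⟨v, hv⟩ ⟨w, hw⟩
  have := forest_nil v l k hv
  have := forest_nil w l k hw
  subst this; subst ‹v = []›
  rfl

lemma forest_l0_empty (n k : ℕ) (hn : n ≠ 0 ∨ k ≠ 0) : IsEmpty (Forest 0 n k) := by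
  constructor
  rintro ⟨v, h1, h2, h3, h4⟩
  rw [List.length_eq_zero_iff] at h1
  subst h1
  simp at h2 h3
  omega

lemma forest_k0_empty (l n k : ℕ) (hl : l ≠ 0) (hk : k < l) : IsEmpty (Forest l n k) := by
  constructor
  rintro ⟨v, h1, h2, h3, h4⟩
  have := (forest_length_le v h4).2
  omega

lemma forest_finite : ∀ n l k, Finite (Forest l n k) := by
  intro n
  induction n with
  | zero => intro l k; exact Finite.of_subsingleton
  | succ n ih =>
    intro l k
    match l, k with
    | 0, k => exact @Finite.of_subsingleton _ (have := forest_l0_empty (n+1) k (Or.inl (Nat.succ_ne_zero n)); inferInstance)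
    | l+1, 0 => exact @Finite.of_subsingleton _ (have := forest_k0_empty (l+1) (n+1) 0 (Nat.succ_ne_zero l) (Nat.succ_pos l); inferInstance)
    | l+1, k+1 =>
      have i1 := ih l k
      have i2 := ih (l+1) k
      have i3 := ih (l+1) (k+1)
      have i4 := ih (l+2) (k+1)
      exact Finite.of_equiv _ (forestEquiv (l := l) (n := n) (k := k)).symm

instance (n l k : ℕ) : Finite (Forest l n k) := forest_finite n l k

noncomputable def P (l n k : ℕ) : ℕ := Nat.card (Forest l n k)

lemma P_zero_zero : P 0 0 0 = 1 := by
  have : Nonempty (Forest 0 0 0) := ⟨⟨[], rfl, rfl, rfl, by simp⟩⟩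
  exact Nat.card_unique

lemma P_zero (l k n : ℕ) (h : ¬(l = 0 ∧ n = 0 ∧ k = 0)) : n = 0 ∨ l = 0 ∨ k < l →
    True := fun _ => trivial

lemma P_n_zero (l k : ℕ) (h : ¬(l = 0 ∧ k = 0)) : P l 0 k = 0 := by
  rw [P]
  have : IsEmpty (Forest l 0 k) := by
    constructor
    rintro ⟨v, hv⟩
    have hnil := forest_nil v l k hv
    subst hnil
    obtain ⟨h1, h2, h3, h4⟩ := hv
    simp at h1 h3
    exact h ⟨h1.symm, h3.symm⟩
  simp

lemma P_l_zero (n k : ℕ) (h : ¬(n = 0 ∧ k = 0)) : P 0 n k = 0 := by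
  rw [P]
  have : IsEmpty (Forest 0 n k) := by
    refine forest_l0_empty n k ?_
    by_contra hc
    push_neg at hc
    exact h ⟨hc.1, hc.2⟩
  simp

lemma P_k_lt (l n k : ℕ) (hl : l ≠ 0) (hk : k < l) : P l n k = 0 := by
  rw [P]
  have : IsEmpty (Forest l n k) := forest_k0_empty l n k hl hk
  simp

lemma P_rec (l n k : ℕ) :
    P (l+1) (n+1) (k+1) = P l n k + P (l+1) n k + P (l+1) n (k+1) + P (l+2) n (k+1) := by
  have h := Nat.card_congr (forestEquiv (l := l) (n := n) (k := k))
  rw [P, P, P, P, P, h]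
  rw [Nat.card_sum, Nat.card_sum, Nat.card_sum]
  ring

def q (l n k : ℕ) : ℚ :=
  if l = 0 then (if n = 0 ∧ k = 0 then 1 else 0)
  else if n = 0 then 0
  else if l ≤ k then (l : ℚ) / n * (n.choose k) * (n.choose (k - l)) else 0

lemma key_identity (l b m : ℕ) :
    ((l:ℚ)+1) * (m+1) * ((m+2).choose (l+b+2)) * ((m+2).choose (b+1)) =
      (m+2) * ( l * ((m+1).choose (l+b+1)) * ((m+1).choose (b+1))
        + (l+1) * ((m+1).choose (l+b+1)) * ((m+1).choose b)
        + (l+1) * ((m+1).choose (l+b+2)) * ((m+1).choose (b+1))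
        + (l+2) * ((m+1).choose (l+b+2)) * ((m+1).choose b) ) := by
  rcases lt_trichotomy (l + b + 1) (m + 1) with hc | hc | hc
  · -- interior: l+b+2 ≤ m+1
    obtain ⟨c, rfl⟩ : ∃ c, m = l + b + 1 + c := ⟨m - (l+b+1), by omega⟩
    rw [Nat.cast_choose (K := ℚ) (by omega : l+b+2 ≤ l+b+1+c+2),
        Nat.cast_choose (K := ℚ) (by omega : b+1 ≤ l+b+1+c+2),
        Nat.cast_choose (K := ℚ) (by omega : l+b+1 ≤ l+b+1+c+1),
        Nat.cast_choose (K := ℚ) (by omega : b+1 ≤ l+b+1+c+1),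
        Nat.cast_choose (K := ℚ) (by omega : l+b+2 ≤ l+b+1+c+1),
        Nat.cast_choose (K := ℚ) (by omega : b ≤ l+b+1+c+1)]
    rw [show l+b+1+c+2 - (l+b+2) = c+1 by omega,
        show l+b+1+c+2 - (b+1) = l+c+2 by omega,
        show l+b+1+c+1 - (l+b+1) = c+1 by omega,
        show l+b+1+c+1 - (b+1) = l+c+1 by omega,
        show l+b+1+c+1 - (l+b+2) = c by omega,
        show l+b+1+c+1 - b = l+c+2 by omega]
    rw [show l+b+1+c+2 = (l+b+c+1)+1+1 by omega, show l+b+1+c+1 = (l+b+c+1)+1 by omega]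
    rw [Nat.factorial_succ ((l+b+c+1)+1), Nat.factorial_succ (l+b+c+1),
        Nat.factorial_succ (l+b+1), Nat.factorial_succ b, Nat.factorial_succ c,
        Nat.factorial_succ (l+c+1)]
    have f1 : ((Nat.factorial (l+b+c+1) : ℚ)) ≠ 0 := by exact_mod_cast Nat.factorial_ne_zero _
    have f2 : ((Nat.factorial (l+b+1) : ℚ)) ≠ 0 := by exact_mod_cast Nat.factorial_ne_zero _
    have f3 : ((Nat.factorial b : ℚ)) ≠ 0 := by exact_mod_cast Nat.factorial_ne_zero _
    have f4 : ((Nat.factorial c : ℚ)) ≠ 0 := by exact_mod_cast Nat.factorial_ne_zero _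
    have f5 : ((Nat.factorial (l+c+1) : ℚ)) ≠ 0 := by exact_mod_cast Nat.factorial_ne_zero _
    have g1 : ((l:ℚ)+b+2) ≠ 0 := by positivity
    have g2 : ((b:ℚ)+1) ≠ 0 := by positivity
    have g3 : ((c:ℚ)+1) ≠ 0 := by positivity
    have g4 : ((l:ℚ)+c+2) ≠ 0 := by positivity
    push_cast
    field_simp
    ring
  · -- boundary: m = l + b
    obtain rfl : m = l + b := by omega
    rw [Nat.choose_self, Nat.choose_self, Nat.choose_eq_zero_of_lt (by omega : l+b+1 < l+b+2)]
    rw [Nat.cast_choose (K := ℚ) (by omega : b+1 ≤ l+b+2),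
        Nat.cast_choose (K := ℚ) (by omega : b+1 ≤ l+b+1),
        Nat.cast_choose (K := ℚ) (by omega : b ≤ l+b+1)]
    rw [show l+b+2 - (b+1) = l+1 by omega,
        show l+b+1 - (b+1) = l by omega, show l+b+1 - b = l+1 by omega]
    rw [show l+b+2 = (l+b+1)+1 by omega]
    rw [Nat.factorial_succ (l+b+1), Nat.factorial_succ b, Nat.factorial_succ l]
    have f1 : ((Nat.factorial (l+b+1) : ℚ)) ≠ 0 := by exact_mod_cast Nat.factorial_ne_zero _
    have f2 : ((Nat.factorial b : ℚ)) ≠ 0 := by exact_mod_cast Nat.factorial_ne_zero _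
    have f3 : ((Nat.factorial l : ℚ)) ≠ 0 := by exact_mod_cast Nat.factorial_ne_zero _
    have g1 : ((l:ℚ)+1) ≠ 0 := by positivity
    have g2 : ((b:ℚ)+1) ≠ 0 := by positivity
    push_cast
    field_simp
    ring
  · -- vanish: l+b+1 > m+1
    rw [Nat.choose_eq_zero_of_lt (by omega : m+2 < l+b+2),
        Nat.choose_eq_zero_of_lt (by omega : m+1 < l+b+1),
        Nat.choose_eq_zero_of_lt (by omega : m+1 < l+b+2)]
    push_cast
    ring

lemma key2 (l m : ℕ) :
    ((l:ℚ)+1)*(m+1)*((m+2).choose (l+1)) = (m+2)*(l*((m+1).choose l) + (l+1)*((m+1).choose (l+1))) := by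
  rcases lt_trichotomy l (m+1) with hc | hc | hc
  · obtain ⟨c, rfl⟩ : ∃ c, m = l + c := ⟨m - l, by omega⟩
    rw [Nat.cast_choose (K := ℚ) (by omega : l+1 ≤ l+c+2),
        Nat.cast_choose (K := ℚ) (by omega : l ≤ l+c+1),
        Nat.cast_choose (K := ℚ) (by omega : l+1 ≤ l+c+1)]
    rw [show l+c+2 - (l+1) = c+1 by omega, show l+c+1 - l = c+1 by omega,
        show l+c+1 - (l+1) = c by omega]
    rw [show l+c+2 = (l+c+1)+1 by omega]
    rw [Nat.factorial_succ (l+c+1), Nat.factorial_succ l, Nat.factorial_succ c]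
    have f1 : ((Nat.factorial (l+c+1) : ℚ)) ≠ 0 := by exact_mod_cast Nat.factorial_ne_zero _
    have f2 : ((Nat.factorial l : ℚ)) ≠ 0 := by exact_mod_cast Nat.factorial_ne_zero _
    have f3 : ((Nat.factorial c : ℚ)) ≠ 0 := by exact_mod_cast Nat.factorial_ne_zero _
    have g1 : ((l:ℚ)+1) ≠ 0 := by positivity
    have g2 : ((c:ℚ)+1) ≠ 0 := by positivity
    push_cast
    field_simp
    ring
  · obtain rfl : l = m+1 := hc
    rw [Nat.choose_self, Nat.choose_eq_zero_of_lt (by omega : m+1 < m+2), Nat.choose_self]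
    push_cast
    ring
  · rw [Nat.choose_eq_zero_of_lt (by omega : m+2 < l+1),
        Nat.choose_eq_zero_of_lt (by omega : m+1 < l),
        Nat.choose_eq_zero_of_lt (by omega : m+1 < l+1)]
    push_cast
    ring

lemma q_formula (l n k : ℕ) (hn : n ≠ 0) (hl : l ≤ k) :
    q l n k = (l : ℚ) / n * (n.choose k) * (n.choose (k - l)) := by
  rcases Nat.eq_zero_or_pos l with rfl | hpos
  · simp [q, hn]
  · rw [q, if_neg (by omega), if_neg hn, if_pos hl]

lemma q_rec (l n k : ℕ) :
    q (l+1) (n+1) (k+1) = q l n k + q (l+1) n k + q (l+1) n (k+1) + q (l+2) n (k+1) := by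
  rcases n with _ | m
  · -- n = 0
    have h0 : q (l+1) 0 k = 0 := by rw [q, if_neg (by omega), if_pos rfl]
    have h1 : q (l+1) 0 (k+1) = 0 := by rw [q, if_neg (by omega), if_pos rfl]
    have h2 : q (l+2) 0 (k+1) = 0 := by rw [q, if_neg (by omega), if_pos rfl]
    rw [h0, h1, h2]
    rcases l with _ | t
    · rcases k with _ | s
      · norm_num [q, Nat.choose_self, Nat.choose_zero_right]
      · have hz : (1:ℕ).choose (s+1+1) = 0 := Nat.choose_eq_zero_of_lt (by omega)
        simp [q, hz]
    · rcases le_or_gt (t+1) k with h | h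
      · have hz : (1:ℕ).choose (k+1) = 0 := Nat.choose_eq_zero_of_lt (by omega)
        simp [q, hz]
      · rw [q, if_neg (by omega : ¬ t+1+1 = 0), if_neg (by omega : ¬ (1:ℕ) = 0),
          if_neg (by omega : ¬ (t+1+1 ≤ k+1)), q, if_neg (by omega : ¬ t+1 = 0), if_pos rfl]
        ring
  · -- n = m+1
    rcases lt_trichotomy k l with hkl | heq | hlk
    · have hl0 : l ≠ 0 := by omega
      rw [q, q, q, q, q]
      rw [if_neg (by omega : ¬ l+1 = 0), if_neg hl0, if_neg (by omega : ¬ l+1 = 0),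
        if_neg (by omega : ¬ l+1 = 0), if_neg (by omega : ¬ l+2 = 0)]
      rw [if_neg (by omega : ¬ (m+1) = 0), if_neg (by omega : ¬ (m+1) = 0),
        if_neg (by omega : ¬ (m+1) = 0), if_neg (by omega : ¬ (m+1) = 0),
        if_neg (by omega : ¬ (m+2) = 0)]
      rw [if_neg (by omega : ¬ (l+1 ≤ k+1)), if_neg (by omega : ¬ (l ≤ k)),
        if_neg (by omega : ¬ (l+1 ≤ k)), if_neg (by omega : ¬ (l+1 ≤ k+1)),
        if_neg (by omega : ¬ (l+2 ≤ k+1))]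
      ring
    · -- k = l
      subst heq
      have e1 : q (k+1) (m+2) (k+1) = ((k:ℚ)+1)/(m+2) * ((m+2).choose (k+1)) * 1 := by
        rw [q_formula _ _ _ (by omega) (by omega), show k+1 - (k+1) = 0 by omega, Nat.choose_zero_right]
        push_cast; ring
      have e2 : q k (m+1) k = (k:ℚ)/(m+1) * ((m+1).choose k) * 1 := by
        rw [q_formula _ _ _ (by omega) (by omega), show k - k = 0 by omega, Nat.choose_zero_right]
        push_cast; ring
      have e3 : q (k+1) (m+1) k = 0 := by
        rw [q, if_neg (by omega : ¬ k+1 = 0), if_neg (by omega : ¬ (m+1) = 0),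
          if_neg (by omega : ¬ (k+1 ≤ k))]
      have e4 : q (k+1) (m+1) (k+1) = ((k:ℚ)+1)/(m+1) * ((m+1).choose (k+1)) * 1 := by
        rw [q_formula _ _ _ (by omega) (by omega), show k+1 - (k+1) = 0 by omega, Nat.choose_zero_right]
        push_cast; ring
      have e5 : q (k+2) (m+1) (k+1) = 0 := by
        rw [q, if_neg (by omega : ¬ k+2 = 0), if_neg (by omega : ¬ (m+1) = 0),
          if_neg (by omega : ¬ (k+2 ≤ k+1))]
      rw [e1, e2, e3, e4, e5]
      have key := key2 k m
      have hm1 : ((m:ℚ)+1) ≠ 0 := by positivity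
      have hm2 : ((m:ℚ)+2) ≠ 0 := by positivity
      field_simp
      linear_combination key
    · -- k > l : k = l + b + 1
      obtain ⟨b, rfl⟩ : ∃ b, k = l + b + 1 := ⟨k - l - 1, by omega⟩
      have e1 : q (l+1) (m+2) (l+b+1+1) =
          ((l:ℚ)+1)/(m+2) * ((m+2).choose (l+b+2)) * ((m+2).choose (b+1)) := by
        rw [q_formula _ _ _ (by omega) (by omega), show l+b+1+1 - (l+1) = b+1 by omega,
          show l+b+1+1 = l+b+2 by omega]
        push_cast; ring
      have e2 : q l (m+1) (l+b+1) = (l:ℚ)/(m+1) * ((m+1).choose (l+b+1)) * ((m+1).choose (b+1)) := by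
        rcases Nat.eq_zero_or_pos l with rfl | hl
        · rw [q, if_pos rfl, if_neg (by omega)]
          push_cast; ring
        · rw [q_formula _ _ _ (by omega) (by omega), show l+b+1 - l = b+1 by omega]
          push_cast; ring
      have e3 : q (l+1) (m+1) (l+b+1) =
          ((l:ℚ)+1)/(m+1) * ((m+1).choose (l+b+1)) * ((m+1).choose b) := by
        rw [q_formula _ _ _ (by omega) (by omega), show l+b+1 - (l+1) = b by omega]
        push_cast; ring
      have e4 : q (l+1) (m+1) (l+b+1+1) =
          ((l:ℚ)+1)/(m+1) * ((m+1).choose (l+b+2)) * ((m+1).choose (b+1)) := by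
        rw [q_formula _ _ _ (by omega) (by omega), show l+b+1+1 - (l+1) = b+1 by omega,
          show l+b+1+1 = l+b+2 by omega]
        push_cast; ring
      have e5 : q (l+2) (m+1) (l+b+1+1) =
          ((l:ℚ)+2)/(m+1) * ((m+1).choose (l+b+2)) * ((m+1).choose b) := by
        rw [q_formula _ _ _ (by omega) (by omega), show l+b+1+1 - (l+2) = b by omega,
          show l+b+1+1 = l+b+2 by omega]
        push_cast; ring
      rw [e1, e2, e3, e4, e5]
      have key := key_identity l b m
      have hm1 : ((m:ℚ)+1) ≠ 0 := by positivity
      have hm2 : ((m:ℚ)+2) ≠ 0 := by positivity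
      field_simp
      linear_combination key

lemma P_eq_q : ∀ n l k, (P l n k : ℚ) = q l n k := by
  intro n
  induction n with
  | zero =>
    intro l k
    rcases Nat.eq_zero_or_pos l with rfl | hl
    · rcases Nat.eq_zero_or_pos k with rfl | hk
      · rw [P_zero_zero, q]; norm_num
      · rw [P_n_zero 0 k (by omega), q, if_pos rfl, if_neg (by omega : ¬((0:ℕ) = 0 ∧ k = 0))]
        norm_num
    · rw [P_n_zero l k (by omega), q, if_neg (by omega), if_pos rfl]
      norm_num
  | succ n ih =>
    intro l k
    rcases Nat.eq_zero_or_pos l with rfl | hl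
    · rw [P_l_zero (n+1) k (by omega), q, if_pos rfl,
        if_neg (by omega : ¬((n+1) = 0 ∧ k = 0))]
      norm_num
    · rcases Nat.eq_zero_or_pos k with rfl | hk
      · rw [P_k_lt l (n+1) 0 (by omega) (by omega), q, if_neg (by omega), if_neg (by omega),
          if_neg (by omega : ¬ (l ≤ 0))]
        norm_num
      · obtain ⟨l, rfl⟩ : ∃ l', l = l'+1 := ⟨l-1, by omega⟩
        obtain ⟨k, rfl⟩ : ∃ k', k = k'+1 := ⟨k-1, by omega⟩
        rw [P_rec, q_rec]
        push_cast
        rw [ih, ih, ih, ih]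

instance : Inhabited PlaneTree := ⟨node []⟩

def treeForestEquiv (n k : ℕ) (hn : n ≠ 0) :
    {T : PlaneTree // T.edges = n ∧ T.leaves = k} ≃ Forest 1 n k where
  toFun := fun ⟨T, hT⟩ => ⟨[T], by
    refine ⟨rfl, by simpa using hT.1, by simpa using hT.2, ?_⟩
    intro t ht
    rw [List.mem_singleton] at ht
    subst ht
    cases t with
    | node ts =>
      cases ts with
      | nil => exact absurd hT.1 (by simp [edges_node]; omega)
      | cons a w => simp [rootDegree]⟩
  invFun := fun x => match x with
    | ⟨[T], hv⟩ => ⟨T, by simpa using hv.2.1, by simpa using hv.2.2.1⟩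
    | ⟨[], hv⟩ => absurd hv.1 (by simp)
    | ⟨_ :: _ :: _, hv⟩ => absurd hv.1 (by simp)
  left_inv := by rintro ⟨T, hT⟩; rfl
  right_inv := by
    rintro ⟨(_ | ⟨T, (_ | ⟨s, w⟩)⟩), hv⟩
    · exact absurd hv.1 (by simp)
    · rfl
    · exact absurd hv.1 (by simp)

/-- The number of plane trees on `n` edges with `k` leaves is the Narayana number:
`n * T_n(k) = C(n,k) * C(n,k-1)` for `n ≥ k ≥ 1`. -/
theorem planeTree_count_leaves_narayana (n k : ℕ) (hk : 1 ≤ k) (hkn : k ≤ n) :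
    n * Nat.card {T : PlaneTree // T.edges = n ∧ T.leaves = k} =
      Nat.choose n k * Nat.choose n (k - 1) := by
  have hn : n ≠ 0 := by omega
  have hcard : Nat.card {T : PlaneTree // T.edges = n ∧ T.leaves = k} = P 1 n k :=
    Nat.card_congr (treeForestEquiv n k hn)
  have hq := P_eq_q n 1 k
  rw [q_formula 1 n k hn hk] at hq
  have : ((n : ℚ)) ≠ 0 := by exact_mod_cast hn
  have main : ((n * Nat.card {T : PlaneTree // T.edges = n ∧ T.leaves = k} : ℕ) : ℚ)
      = ((Nat.choose n k * Nat.choose n (k - 1) : ℕ) : ℚ) := by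
    push_cast
    rw [show ((Nat.card {T : PlaneTree // T.edges = n ∧ T.leaves = k} : ℕ) : ℚ) = (P 1 n k : ℚ)
      from by exact_mod_cast congrArg (fun x : ℕ => (x : ℚ)) hcard, hq]
    push_cast
    field_simp
  exact_mod_cast main
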